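/- Let 0 < p < 1/2. Then for each i ∈ {1,2,3}, G_i maps the interior of W into the interior of W, and for all i ≠ j in {1,2,3}, G_i(W°) ∩ G_j(W°) = ∅. In particular, the iterated function system {G₁, G₂, G₃} satisfies the open set condition with open set W°. -/

import Mathlib

open Matrix MeasureTheory Filter
open scoped ENNReal

noncomputable section

abbrev E3 : Type := EuclideanSpace ℝ (Fin 3)
abbrev Mat3 : Type := Matrix (Fin 3) (Fin 3) ℝ

/-- The action of a matrix on Euclidean 3-space. -/
noncomputable def matApply (A : Mat3) (x : E3) : E3 := Matrix.toEuclideanCLM (𝕜 := ℝ) A x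

/-- The largest singular value `α₁(A) = ‖A‖` (Euclidean operator norm). -/
noncomputable def sv1 (A : Mat3) : ℝ := ‖Matrix.toEuclideanCLM (𝕜 := ℝ) A‖

/-- The smallest singular value `α₃(A) = ‖A⁻¹‖⁻¹`. -/
noncomputable def sv3 (A : Mat3) : ℝ := (‖Matrix.toEuclideanCLM (𝕜 := ℝ) A⁻¹‖)⁻¹

/-- The middle singular value `α₂(A) = |det A| / (α₁(A) α₃(A))`. -/
noncomputable def sv2 (A : Mat3) : ℝ := |A.det| / (sv1 A * sv3 A)

/-- Falconer's singular value function `φ^s(A)`. -/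
noncomputable def svf (s : ℝ) (A : Mat3) : ℝ :=
  if s ≤ 1 then (sv1 A) ^ s
  else if s ≤ 2 then sv1 A * (sv2 A) ^ (s - 1)
  else if s ≤ 3 then sv1 A * sv2 A * (sv3 A) ^ (s - 2)
  else (sv1 A * sv2 A * sv3 A) ^ (s / 3)

/-- The three matrices `C₁, C₂, C₃` (with 0-based indexing). -/
def Cmat (p : ℝ) : Fin 3 → Mat3 :=
  ![!![1 - 2*p, -p, -p; 0, p, 0; 0, 0, p],
    !![p, 0, 0; -p, 1 - 2*p, -p; 0, 0, p],
    !![p, 0, 0; 0, p, 0; -p, -p, 1 - 2*p]]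

/-- The product `C_w = C_{j₁} ⋯ C_{jₙ}` along a word `w = (j₁, …, jₙ)`. -/
noncomputable def Cword (p : ℝ) {n : ℕ} (w : Fin n → Fin 3) : Mat3 :=
  ((List.ofFn w).map (Cmat p)).prod

/-- standard basis vectors of `E3` -/
noncomputable def eVec (i : Fin 3) : E3 := EuclideanSpace.single i 1

/-- The affine map `G_i(x) = C_i x + 2p·e_i`. -/
noncomputable def Gmap (p : ℝ) (i : Fin 3) (x : E3) : E3 :=
  matApply (Cmat p i) x + (2 * p) • eVec i

/-- The composition `G_w = G_{j₁} ∘ ⋯ ∘ G_{jₙ}` along a word `w = (j₁, …, jₙ)`. -/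
noncomputable def Gword (p : ℝ) {n : ℕ} (w : Fin n → Fin 3) : E3 → E3 :=
  ((List.ofFn w).map (Gmap p)).foldr (· ∘ ·) id

/-- Summability of the double series `Σ_{n=1}^∞ Σ_{w ∈ {1,2,3}ⁿ} φ^s(C_w)`
(all terms are nonnegative, so summability is equivalent to finiteness of the sum). -/
def seriesSummable (p s : ℝ) : Prop :=
  Summable (fun x : Σ n : ℕ, (Fin (n+1) → Fin 3) => svf s (Cword p x.2))

/-- The affinity dimension `s₀ = inf{s > 0 : Σ_n Σ_w φ^s(C_w) < ∞}`. -/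
noncomputable def s0 (p : ℝ) : ℝ := sInf {s : ℝ | 0 < s ∧ seriesSummable p s}

/-- The minimal number of balls of radius `δ` needed to cover `A`. -/
noncomputable def coverNum (A : Set E3) (δ : ℝ) : ℕ :=
  sInf {n : ℕ | ∃ t : Finset E3, t.card = n ∧ A ⊆ ⋃ x ∈ t, Metric.ball x δ}

/-- The upper box-counting dimension `limsup_{δ→0⁺} log N_δ(A) / (−log δ)`. -/
noncomputable def upperBoxDim (A : Set E3) : ℝ :=
  Filter.limsup (fun δ : ℝ => Real.log (coverNum A δ) / (-Real.log δ))
    (nhdsWithin 0 (Set.Ioi 0))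

/-- The vector `(1,1,1)`. -/
noncomputable def onesVec : E3 := (WithLp.equiv 2 (Fin 3 → ℝ)).symm ![1, 1, 1]

/-- Orthogonal projection of `ℝ³` onto the plane `V = {x : x₁ + x₂ + x₃ = 0}`. -/
noncomputable def projV (x : E3) : E3 := x - (((x 0) + (x 1) + (x 2)) / 3) • onesVec

/-- The vector `(a,b,c)` in `E3`. -/
noncomputable def vec3 (a b c : ℝ) : E3 := (WithLp.equiv 2 (Fin 3 → ℝ)).symm ![a, b, c]

/-- The triangle `T₀ = conv{e₁, e₂, e₃}`. -/
noncomputable def T0set : Set E3 := convexHull ℝ {eVec 0, eVec 1, eVec 2}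

/-- The standard tetrahedron `W = conv{0, e₁, e₂, e₃}`. -/
noncomputable def Wset : Set E3 := convexHull ℝ {0, eVec 0, eVec 1, eVec 2}

/-- The triangle `T_ε = conv{(1−2ε,ε,ε), (ε,1−2ε,ε), (ε,ε,1−2ε)}`. -/
noncomputable def Ttri (ε : ℝ) : Set E3 :=
  convexHull ℝ {vec3 (1 - 2*ε) ε ε, vec3 ε (1 - 2*ε) ε, vec3 ε ε (1 - 2*ε)}

lemma matApply_coord (A : Mat3) (x : E3) (i : Fin 3) :
    matApply A x i = A i 0 * x 0 + A i 1 * x 1 + A i 2 * x 2 := by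
  have h := congrFun (Matrix.ofLp_toEuclideanCLM (𝕜 := ℝ) (n := Fin 3) A x) i
  simpa [matApply, Matrix.mulVec, dotProduct, Fin.sum_univ_three] using h

noncomputable def sumCLM : E3 →L[ℝ] ℝ :=
  EuclideanSpace.proj 0 + EuclideanSpace.proj 1 + EuclideanSpace.proj 2

lemma sumCLM_apply (x : E3) : sumCLM x = x 0 + x 1 + x 2 := by
  simp [sumCLM]

lemma sumCLM_surj : Function.Surjective sumCLM := by
  intro c
  refine ⟨(WithLp.equiv 2 (Fin 3 → ℝ)).symm ![c, 0, 0], ?_⟩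
  simp [sumCLM_apply]

def Sset : Set E3 := {x | 0 < x 0 ∧ 0 < x 1 ∧ 0 < x 2 ∧ x 0 + x 1 + x 2 < 1}

lemma isOpen_Sset : IsOpen Sset := by
  have h : Sset = ({x : E3 | 0 < x 0} ∩ ({x : E3 | 0 < x 1} ∩
      ({x : E3 | 0 < x 2} ∩ sumCLM ⁻¹' Set.Iio 1))) := by
    ext x
    simp only [Sset, Set.mem_setOf_eq, Set.mem_inter_iff, Set.mem_preimage, Set.mem_Iio,
      sumCLM_apply]
  rw [h]
  refine IsOpen.inter ?_ (IsOpen.inter ?_ (IsOpen.inter ?_ ?_))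
  · exact isOpen_lt continuous_const (EuclideanSpace.proj (𝕜 := ℝ) (0 : Fin 3)).continuous
  · exact isOpen_lt continuous_const (EuclideanSpace.proj (𝕜 := ℝ) (1 : Fin 3)).continuous
  · exact isOpen_lt continuous_const (EuclideanSpace.proj (𝕜 := ℝ) (2 : Fin 3)).continuous
  · exact isOpen_Iio.preimage sumCLM.continuous

lemma Wset_subset_K :
    Wset ⊆ {x : E3 | 0 ≤ x 0 ∧ 0 ≤ x 1 ∧ 0 ≤ x 2 ∧ x 0 + x 1 + x 2 ≤ 1} := by
  apply convexHull_min
  · rintro y hy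
    simp only [Set.mem_insert_iff, Set.mem_singleton_iff] at hy
    rcases hy with rfl | rfl | rfl | rfl <;>
      simp [eVec, EuclideanSpace.single_apply]
  · rintro x hx y hy a b ha hb hab
    simp only [Set.mem_setOf_eq, PiLp.add_apply, PiLp.smul_apply, smul_eq_mul] at *
    obtain ⟨hx0, hx1, hx2, hxs⟩ := hx
    obtain ⟨hy0, hy1, hy2, hys⟩ := hy
    refine ⟨by positivity, by positivity, by positivity, by nlinarith⟩

lemma interior_W_subset_S : interior Wset ⊆ Sset := by
  intro x hx
  have hsub : Wset ⊆ ({y : E3 | 0 ≤ y 0} ∩ ({y : E3 | 0 ≤ y 1} ∩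
      ({y : E3 | 0 ≤ y 2} ∩ sumCLM ⁻¹' Set.Iic 1))) := by
    intro y hy
    obtain ⟨h0, h1, h2, hs⟩ := Wset_subset_K hy
    exact ⟨h0, h1, h2, by simpa [sumCLM_apply] using hs⟩
  have h := interior_mono hsub hx
  rw [interior_inter, interior_inter, interior_inter,
    sumCLM.interior_preimage sumCLM_surj, interior_Iic,
    interior_halfSpace, interior_halfSpace, interior_halfSpace] at h
  obtain ⟨h0, h1, h2, hs⟩ := h
  exact ⟨h0, h1, h2, by simpa [sumCLM_apply] using hs⟩

lemma S_subset_W : Sset ⊆ Wset := by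
  rintro x ⟨h0, h1, h2, hs⟩
  have hconv : Convex ℝ Wset := convex_convexHull ℝ _
  have hmem := hconv.sum_mem (t := (Finset.univ : Finset (Fin 4)))
    (w := ![1 - (x 0 + x 1 + x 2), x 0, x 1, x 2]) (z := ![0, eVec 0, eVec 1, eVec 2])
    (fun i _ => by fin_cases i <;> simp <;> linarith)
    (by simp [Fin.sum_univ_four]; ring)
    (fun i _ => by
      have hW : {(0 : E3), eVec 0, eVec 1, eVec 2} ⊆ Wset := subset_convexHull ℝ _
      fin_cases i <;> simp <;> apply hW <;> simp)
  have hx : x = ∑ i : Fin 4,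
      (![1 - (x 0 + x 1 + x 2), x 0, x 1, x 2]) i • (![0, eVec 0, eVec 1, eVec 2]) i := by
    rw [Fin.sum_univ_four]
    refine PiLp.ext fun j => ?_
    fin_cases j <;> simp [eVec, EuclideanSpace.single_apply]
  rw [hx]
  exact hmem

lemma interior_Wset_eq : interior Wset = Sset :=
  subset_antisymm interior_W_subset_S (interior_maximal S_subset_W isOpen_Sset)

lemma Gmap_coord (p : ℝ) (i : Fin 3) (x : E3) (j : Fin 3) :
    Gmap p i x j = (Cmat p i) j 0 * x 0 + (Cmat p i) j 1 * x 1 + (Cmat p i) j 2 * x 2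
      + (2 * p) * (if j = i then 1 else 0) := by
  simp [Gmap, matApply_coord, eVec, EuclideanSpace.single_apply]

lemma key0 (p : ℝ) (hp0 : 0 < p) (hp1 : p < 1/2) (x : E3) (hx : x ∈ Sset) :
    Gmap p 0 x ∈ Sset ∧ ∀ j : Fin 3, j ≠ 0 → Gmap p 0 x j < Gmap p 0 x 0 := by
  obtain ⟨h0, h1, h2, hs⟩ := hx
  have g0 : Gmap p 0 x 0 = (1 - 2*p) * x 0 + -p * x 1 + -p * x 2 + 2*p := by
    rw [Gmap_coord]; simp [Cmat, Matrix.vecHead, Matrix.vecTail]; try ring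
  have g1 : Gmap p 0 x 1 = p * x 1 := by
    rw [Gmap_coord]; simp [Cmat, Matrix.vecHead, Matrix.vecTail]; try ring
  have g2 : Gmap p 0 x 2 = p * x 2 := by
    rw [Gmap_coord]; simp [Cmat, Matrix.vecHead, Matrix.vecTail]; try ring
  refine ⟨⟨?_, ?_, ?_, ?_⟩, ?_⟩
  · rw [g0]; nlinarith
  · rw [g1]; nlinarith
  · rw [g2]; nlinarith
  · rw [g0, g1, g2]; nlinarith
  · intro j hj
    fin_cases j
    · exact absurd rfl hj
    · show Gmap p 0 x 1 < Gmap p 0 x 0; rw [g1, g0]; nlinarith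
    · show Gmap p 0 x 2 < Gmap p 0 x 0; rw [g2, g0]; nlinarith

lemma key1 (p : ℝ) (hp0 : 0 < p) (hp1 : p < 1/2) (x : E3) (hx : x ∈ Sset) :
    Gmap p 1 x ∈ Sset ∧ ∀ j : Fin 3, j ≠ 1 → Gmap p 1 x j < Gmap p 1 x 1 := by
  obtain ⟨h0, h1, h2, hs⟩ := hx
  have g0 : Gmap p 1 x 0 = p * x 0 := by
    rw [Gmap_coord]; simp [Cmat, Matrix.vecHead, Matrix.vecTail]; try ring
  have g1 : Gmap p 1 x 1 = -p * x 0 + (1 - 2*p) * x 1 + -p * x 2 + 2*p := by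
    rw [Gmap_coord]; simp [Cmat, Matrix.vecHead, Matrix.vecTail]; try ring
  have g2 : Gmap p 1 x 2 = p * x 2 := by
    rw [Gmap_coord]; simp [Cmat, Matrix.vecHead, Matrix.vecTail]; try ring
  refine ⟨⟨?_, ?_, ?_, ?_⟩, ?_⟩
  · rw [g0]; nlinarith
  · rw [g1]; nlinarith
  · rw [g2]; nlinarith
  · rw [g0, g1, g2]; nlinarith
  · intro j hj
    fin_cases j
    · show Gmap p 1 x 0 < Gmap p 1 x 1; rw [g0, g1]; nlinarith
    · exact absurd rfl hj
    · show Gmap p 1 x 2 < Gmap p 1 x 1; rw [g2, g1]; nlinarith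

lemma key2 (p : ℝ) (hp0 : 0 < p) (hp1 : p < 1/2) (x : E3) (hx : x ∈ Sset) :
    Gmap p 2 x ∈ Sset ∧ ∀ j : Fin 3, j ≠ 2 → Gmap p 2 x j < Gmap p 2 x 2 := by
  obtain ⟨h0, h1, h2, hs⟩ := hx
  have g0 : Gmap p 2 x 0 = p * x 0 := by
    rw [Gmap_coord]; simp [Cmat, Matrix.vecHead, Matrix.vecTail]; try ring
  have g1 : Gmap p 2 x 1 = p * x 1 := by
    rw [Gmap_coord]; simp [Cmat, Matrix.vecHead, Matrix.vecTail]; try ring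
  have g2 : Gmap p 2 x 2 = -p * x 0 + -p * x 1 + (1 - 2*p) * x 2 + 2*p := by
    rw [Gmap_coord]; simp [Cmat, Matrix.vecHead, Matrix.vecTail]; try ring
  refine ⟨⟨?_, ?_, ?_, ?_⟩, ?_⟩
  · rw [g0]; nlinarith
  · rw [g1]; nlinarith
  · rw [g2]; nlinarith
  · rw [g0, g1, g2]; nlinarith
  · intro j hj
    fin_cases j
    · show Gmap p 2 x 0 < Gmap p 2 x 2; rw [g0, g2]; nlinarith
    · show Gmap p 2 x 1 < Gmap p 2 x 2; rw [g1, g2]; nlinarith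
    · exact absurd rfl hj

lemma key (p : ℝ) (hp0 : 0 < p) (hp1 : p < 1/2) (i : Fin 3) (x : E3) (hx : x ∈ Sset) :
    Gmap p i x ∈ Sset ∧ ∀ j : Fin 3, j ≠ i → Gmap p i x j < Gmap p i x i := by
  fin_cases i
  · exact key0 p hp0 hp1 x hx
  · exact key1 p hp0 hp1 x hx
  · exact key2 p hp0 hp1 x hx

/-- Lemma (the maps `G₁, G₂, G₃` satisfy the open set condition with the open tetrahedron). -/
theorem open_set_condition (p : ℝ) (hp0 : 0 < p) (hp1 : p < 1/2) :
    (∀ i : Fin 3, Gmap p i '' interior Wset ⊆ interior Wset) ∧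
    (∀ i j : Fin 3, i ≠ j →
      Gmap p i '' interior Wset ∩ Gmap p j '' interior Wset = ∅) := by
  constructor
  · rintro i z ⟨x, hx, rfl⟩
    rw [interior_Wset_eq] at hx ⊢
    exact (key p hp0 hp1 i x hx).1
  · intro i j hij
    ext z
    simp only [Set.mem_inter_iff, Set.mem_empty_iff_false, iff_false, not_and]
    rintro ⟨x, hx, rfl⟩ ⟨y, hy, hzy⟩
    rw [interior_Wset_eq] at hx hy
    have h1 := (key p hp0 hp1 i x hx).2 j hij.symm
    have h2 := (key p hp0 hp1 j y hy).2 i hij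
    rw [hzy] at h2
    exact absurd (h1.trans h2) (lt_irrefl _)
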